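/- Let X be a two-sided quaternionic Banach space and let T ∈ B(X) be power-bounded. Then for every s ∈ ℍ with |s| > 1 and every integer n ≥ 1, one has s ∈ ρ_S(T) and ‖Y_L^n(s,T)‖ ≤ p(T) / (1 − |s|^{−1})ⁿ. -/

import Mathlib

open MulOpposite Filter

noncomputable section

local notation "ℍ" => Quaternion ℝ

variable {X : Type*} [NormedAddCommGroup X] [NormedSpace ℝ X] [CompleteSpace X]
  [Module ℍ X] [Module ℍᵐᵒᵖ X]
  [IsScalarTower ℝ ℍ X] [IsScalarTower ℝ ℍᵐᵒᵖ X]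
  [SMulCommClass ℝ ℍ X] [SMulCommClass ℝ ℍᵐᵒᵖ X]
  [SMulCommClass ℍ ℍᵐᵒᵖ X]
  [IsBoundedSMul ℍ X] [IsBoundedSMul ℍᵐᵒᵖ X]

/-- Left multiplication by a quaternion, as a bounded real-linear operator on `X`. -/
def lmulL (s : ℍ) : X →L[ℝ] X :=
  LinearMap.mkContinuous
    { toFun := fun v => s • v
      map_add' := fun u v => smul_add s u v
      map_smul' := fun r v => (smul_comm r s v).symm }
    ‖s‖ (fun v => norm_smul_le s v)

/-- `T` is right `ℍ`-linear: `T (v q) = (T v) q`. -/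
def RightLinear (T : X →L[ℝ] X) : Prop :=
  ∀ (q : ℍ) (v : X), T (op q • v) = op q • T v

/-- The operator `Q_s(T) = T² − 2 Re(s) T + |s|² I`. -/
def Qs (s : ℍ) (T : X →L[ℝ] X) : X →L[ℝ] X :=
  T * T - (2 * s.re) • T + (‖s‖ ^ 2 : ℝ) • (1 : X →L[ℝ] X)

/-- Invertibility in the algebra `B(X)` of bounded right `ℍ`-linear operators. -/
def InvertibleInB (A : X →L[ℝ] X) : Prop :=
  ∃ B : X →L[ℝ] X, RightLinear B ∧ A * B = 1 ∧ B * A = 1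

/-- The S-resolvent set of `T`. -/
def sResolventSet (T : X →L[ℝ] X) : Set ℍ :=
  {s : ℍ | InvertibleInB (Qs s T)}

/-- The S-spectrum of `T`. -/
def sSpectrum (T : X →L[ℝ] X) : Set ℍ :=
  {s : ℍ | ¬ InvertibleInB (Qs s T)}

/-- The left S-resolvent operator `S_L^{-1}(s,T) = Q_s(T)⁻¹ (conj(s) I − T)`. -/
def sResL (s : ℍ) (T : X →L[ℝ] X) : X →L[ℝ] X :=
  Ring.inverse (Qs s T) * (lmulL (star s) - T)

/-- `T` is power-bounded: `sup_{n ≥ 1} ‖Tⁿ‖ < ∞`. -/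
def PowerBounded (T : X →L[ℝ] X) : Prop :=
  ∃ C : ℝ, ∀ n : ℕ, 1 ≤ n → ‖T ^ n‖ ≤ C

/-- `p(T) = sup_{n ≥ 1} ‖Tⁿ‖`. -/
def pBound (T : X →L[ℝ] X) : ℝ :=
  ⨆ n : ℕ, ‖T ^ (n + 1)‖

/-- `S_L^{-n}(s,T) = Q_s(T)^{-n} Σ_{m=0}^{n} C(n,m) (−T)ᵐ conj(s)^{n−m}`. -/
def sResLn (n : ℕ) (s : ℍ) (T : X →L[ℝ] X) : X →L[ℝ] X :=
  Ring.inverse (Qs s T) ^ n *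
    ∑ m ∈ Finset.range (n + 1), (n.choose m : ℝ) • ((-T) ^ m * lmulL (star s ^ (n - m)))

/-- `S_R^{-n}(s,T) = (Σ_{m=0}^{n} C(n,m) conj(s)^{n−m} (−T)ᵐ) Q_s(T)^{-n}`. -/
def sResRn (n : ℕ) (s : ℍ) (T : X →L[ℝ] X) : X →L[ℝ] X :=
  (∑ m ∈ Finset.range (n + 1), (n.choose m : ℝ) • (lmulL (star s ^ (n - m)) * (-T) ^ m)) *
    Ring.inverse (Qs s T) ^ n

/-- `Y_L^n(s,T) = Tⁿ S_L^{-n}(s,T) sⁿ`. -/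
def YLn (n : ℕ) (s : ℍ) (T : X →L[ℝ] X) : X →L[ℝ] X :=
  T ^ n * sResLn n s T * lmulL (s ^ n)

/-- `Y_R^n(s,T) = sⁿ S_R^{-n}(s,T) Tⁿ`. -/
def YRn (n : ℕ) (s : ℍ) (T : X →L[ℝ] X) : X →L[ℝ] X :=
  lmulL (s ^ n) * sResRn n s T * T ^ n

/-- coefficients of the inverse of `Q_s(T)` -/
def acoef (s : ℍ) (k : ℕ) : ℍ :=
  ∑ i ∈ Finset.range (k + 1), s⁻¹ ^ (i + 1) * (star s)⁻¹ ^ (k - i + 1)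

/-- coefficients of `S_L^{-(m+1)}` -/
def zcoef (s : ℍ) (m k : ℕ) : ℍ := (((k + m).choose m : ℝ)) • s⁻¹ ^ (m + 1 + k)

/-- shift a coefficient sequence -/
def pre (c : ℕ → ℍ) : ℕ → ℍ
  | 0 => 0
  | (k + 1) => c k

/-- the effect of multiplying by `Q_s(T)` on coefficients -/
def qop (s : ℍ) (c : ℕ → ℍ) : ℕ → ℍ :=
  fun k => pre (pre c) k - (2 * s.re) • pre c k + (‖s‖ ^ 2 : ℝ) • c k

section quat
variable {s : ℍ} (hs : s ≠ 0)

lemma coe_normsq_eq : ((‖s‖ ^ 2 : ℝ) : ℍ) = s * star s := by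
  rw [Quaternion.self_mul_star, Quaternion.normSq_eq_norm_mul_self, sq]

lemma coe_two_re : ((2 * s.re : ℝ) : ℍ) = s + star s := (Quaternion.self_add_star' s).symm

lemma smul_normsq (q : ℍ) : (‖s‖ ^ 2 : ℝ) • q = s * (star s * q) := by
  rw [← Quaternion.coe_mul_eq_smul, coe_normsq_eq, mul_assoc]

lemma smul_two_re (q : ℍ) : (2 * s.re : ℝ) • q = s * q + star s * q := by
  rw [← Quaternion.coe_mul_eq_smul, coe_two_re, add_mul]

lemma comm_st : Commute s (star s) := (star_comm_self' s).symm

include hs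

lemma s_mul_inv_pow (j : ℕ) : s * s⁻¹ ^ (j + 1) = s⁻¹ ^ j := by
  rw [pow_succ', ← mul_assoc, mul_inv_cancel₀ hs, one_mul]

lemma t_mul_inv_pow (j : ℕ) : star s * (star s)⁻¹ ^ (j + 1) = (star s)⁻¹ ^ j := by
  rw [pow_succ', ← mul_assoc, mul_inv_cancel₀ (star_ne_zero.2 hs), one_mul]

omit hs in
lemma comm_tu : Commute (star s) s⁻¹ := comm_st.symm.inv_right₀

lemma t_mul_uv (i j : ℕ) :
    star s * (s⁻¹ ^ i * (star s)⁻¹ ^ (j + 1)) = s⁻¹ ^ i * (star s)⁻¹ ^ j := by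
  rw [← mul_assoc, ((comm_tu).pow_right i).eq, mul_assoc, t_mul_inv_pow hs]

lemma st_mul_uv (i j : ℕ) :
    s * star s * (s⁻¹ ^ (i + 1) * (star s)⁻¹ ^ (j + 1)) = s⁻¹ ^ i * (star s)⁻¹ ^ j := by
  rw [mul_assoc, t_mul_uv hs, ← mul_assoc, pow_succ', ← mul_assoc, mul_inv_cancel₀ hs, one_mul]

lemma acoef_rec (k : ℕ) :
    acoef s (k + 1) = s⁻¹ * (acoef s k + (star s)⁻¹ ^ (k + 2)) := by
  rw [acoef, Finset.sum_range_succ']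
  have h0 : s⁻¹ ^ (0 + 1) * (star s)⁻¹ ^ (k + 1 - 0 + 1) = s⁻¹ * (star s)⁻¹ ^ (k + 2) := by
    norm_num
  rw [h0, mul_add, acoef, Finset.mul_sum]
  congr 1
  refine Finset.sum_congr rfl fun i hi => ?_
  rw [Finset.mem_range] at hi
  have : k + 1 - (i + 1) = k - i := by omega
  rw [this, pow_succ', mul_assoc]

lemma s_mul_acoef (k : ℕ) : s * acoef s (k + 1) = acoef s k + (star s)⁻¹ ^ (k + 2) := by
  rw [acoef_rec hs, ← mul_assoc, mul_inv_cancel₀ hs, one_mul]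

omit hs

lemma smul_normsq' (q : ℍ) : (‖s‖ ^ 2 : ℝ) • q = star s * (s * q) := by
  rw [← Quaternion.coe_mul_eq_smul, coe_normsq_eq, comm_st.eq, mul_assoc]

lemma t_comm_upow (j : ℕ) : star s * s⁻¹ ^ j = s⁻¹ ^ j * star s := (comm_tu.pow_right j).eq

lemma qop_zero (c : ℕ → ℍ) : qop s c 0 = (‖s‖ ^ 2 : ℝ) • c 0 := by
  simp [qop, pre]

lemma qop_one (c : ℕ → ℍ) : qop s c 1 = (‖s‖ ^ 2 : ℝ) • c 1 - (2 * s.re) • c 0 := by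
  simp [qop, pre]; abel

lemma qop_ss (c : ℕ → ℍ) (k : ℕ) :
    qop s c (k + 2) = c k - (2 * s.re) • c (k + 1) + (‖s‖ ^ 2 : ℝ) • c (k + 2) := by
  simp [qop, pre]

include hs

lemma s_mul_uv (i j : ℕ) :
    s * (s⁻¹ ^ (i + 1) * (star s)⁻¹ ^ j) = s⁻¹ ^ i * (star s)⁻¹ ^ j := by
  rw [← mul_assoc, s_mul_inv_pow hs i]

lemma key0_0 : qop s (acoef s) 0 = 1 := by
  have ha : acoef s 0 = s⁻¹ ^ (0 + 1) * (star s)⁻¹ ^ (0 + 1) := by simp [acoef]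
  rw [qop_zero, ha, smul_normsq', s_mul_uv hs 0 (0 + 1), pow_zero, one_mul,
    t_mul_inv_pow hs 0, pow_zero]

lemma key0_1 : qop s (acoef s) 1 = 0 := by
  have ha : acoef s 0 = s⁻¹ ^ (0 + 1) * (star s)⁻¹ ^ (0 + 1) := by simp [acoef]
  rw [qop_one, smul_normsq', s_mul_acoef hs 0, mul_add, t_mul_inv_pow hs 1, smul_two_re,
    ha, s_mul_uv hs 0 (0 + 1), pow_zero, one_mul, pow_one]
  abel

lemma key0_ss (k : ℕ) : qop s (acoef s) (k + 2) = 0 := by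
  rw [qop_ss, smul_normsq', s_mul_acoef hs (k + 1), smul_two_re, s_mul_acoef hs k, mul_add,
    t_mul_inv_pow hs (k + 2)]
  abel

omit hs
lemma zcoef_zero_eq (k : ℕ) : zcoef s 0 k = s⁻¹ ^ (k + 1) := by
  simp [zcoef, add_comm]
include hs

lemma key1_0 : qop s (zcoef s 0) 0 = star s := by
  rw [qop_zero, zcoef_zero_eq, smul_normsq', s_mul_inv_pow hs 0, pow_zero, mul_one]

lemma key1_1 : qop s (zcoef s 0) 1 = -1 := by
  rw [qop_one, zcoef_zero_eq, zcoef_zero_eq, smul_normsq', s_mul_inv_pow hs 1, smul_two_re,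
    s_mul_inv_pow hs 0, pow_zero, pow_one]
  abel

lemma key1_ss (k : ℕ) : qop s (zcoef s 0) (k + 2) = 0 := by
  rw [qop_ss, zcoef_zero_eq, zcoef_zero_eq, zcoef_zero_eq, smul_normsq',
    s_mul_inv_pow hs (k + 2), smul_two_re, s_mul_inv_pow hs (k + 1)]
  abel

lemma key2_0 (m : ℕ) : qop s (zcoef s (m + 1)) 0 = zcoef s m 0 * star s := by
  have h1 : zcoef s (m + 1) 0 = s⁻¹ ^ (m + 1 + 1) := by simp [zcoef]
  have h2 : zcoef s m 0 = s⁻¹ ^ (m + 1) := by simp [zcoef]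
  rw [qop_zero, h1, h2, smul_normsq', s_mul_inv_pow hs (m + 1), t_comm_upow]

lemma key2_1 (m : ℕ) :
    qop s (zcoef s (m + 1)) 1 = zcoef s m 1 * star s - zcoef s m 0 := by
  have h0 : zcoef s (m + 1) 0 = s⁻¹ ^ (m + 1 + 1) := by simp [zcoef]
  have h1 : zcoef s (m + 1) 1 = ((m + 1 + 1 : ℕ) : ℝ) • s⁻¹ ^ (m + 1 + 1 + 1) := by
    rw [zcoef, show (1 + (m + 1)) = (m + 1) + 1 by omega, Nat.choose_succ_self_right]
  have h2 : zcoef s m 0 = s⁻¹ ^ (m + 1) := by simp [zcoef]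
  have h3 : zcoef s m 1 = ((m + 1 : ℕ) : ℝ) • s⁻¹ ^ (m + 1 + 1) := by
    rw [zcoef, show (1 + m) = m + 1 by omega, Nat.choose_succ_self_right]
  rw [qop_one, h0, h1, h2, h3, smul_normsq', mul_smul_comm, mul_smul_comm,
    s_mul_inv_pow hs (m + 1 + 1), t_comm_upow, smul_two_re, s_mul_inv_pow hs (m + 1),
    t_comm_upow, smul_mul_assoc]
  match_scalars <;> push_cast <;> ring

lemma key2_ss (m k : ℕ) :
    qop s (zcoef s (m + 1)) (k + 2) = zcoef s m (k + 2) * star s - zcoef s m (k + 1) := by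
  have hc1 : ((k + (m + 1)).choose (m + 1) : ℝ) - ((k + 1 + (m + 1)).choose (m + 1) : ℝ)
      = -(((k + 1 + m).choose m : ℝ)) := by
    have hp := Nat.choose_succ_succ (k + m + 1) m
    rw [show k + 1 + (m + 1) = (k + m + 1) + 1 by omega, hp,
      show k + (m + 1) = k + m + 1 by omega, show k + 1 + m = k + m + 1 by omega]
    push_cast; ring
  have hc2 : ((k + 2 + (m + 1)).choose (m + 1) : ℝ) - ((k + 1 + (m + 1)).choose (m + 1) : ℝ)
      = ((k + 2 + m).choose m : ℝ) := by
    have hp := Nat.choose_succ_succ (k + m + 2) m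
    rw [show k + 2 + (m + 1) = (k + m + 2) + 1 by omega, hp,
      show k + 1 + (m + 1) = k + m + 2 by omega, show k + 2 + m = k + m + 2 by omega]
    push_cast; ring
  rw [qop_ss]
  simp only [zcoef]
  rw [smul_normsq', mul_smul_comm, mul_smul_comm,
    show m + 1 + 1 + (k + 2) = ((m + 1 + 1 + k) + 1) + 1 by omega,
    s_mul_inv_pow hs (m + 1 + 1 + k + 1), t_comm_upow, smul_two_re,
    show m + 1 + 1 + (k + 1) = (m + 1 + 1 + k) + 1 by omega,
    mul_smul_comm, mul_smul_comm,
    s_mul_inv_pow hs (m + 1 + 1 + k), t_comm_upow, smul_mul_assoc,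
    show m + 1 + (k + 2) = (m + 1 + 1 + k) + 1 by omega,
    show m + 1 + (k + 1) = m + 1 + 1 + k by omega]
  match_scalars
  · linear_combination hc1
  · linear_combination hc2

omit hs

lemma norm_acoef_le {r : ℝ} (hr : ‖s‖⁻¹ ≤ r) (hr0 : 0 ≤ r) (k : ℕ) :
    ‖acoef s k‖ ≤ (k + 1 : ℝ) * r ^ (k + 2) := by
  have hterm : ∀ i ∈ Finset.range (k + 1),
      ‖s⁻¹ ^ (i + 1) * (star s)⁻¹ ^ (k - i + 1)‖ ≤ r ^ (k + 2) := by
    intro i hi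
    rw [Finset.mem_range] at hi
    rw [norm_mul, norm_pow, norm_pow, norm_inv, norm_inv, norm_star, ← pow_add]
    calc ‖s‖⁻¹ ^ (i + 1 + (k - i + 1)) ≤ r ^ (i + 1 + (k - i + 1)) := by
          exact pow_le_pow_left₀ (by positivity) hr _
      _ = r ^ (k + 2) := by congr 1; omega
  calc ‖acoef s k‖ ≤ ∑ i ∈ Finset.range (k + 1), ‖s⁻¹ ^ (i + 1) * (star s)⁻¹ ^ (k - i + 1)‖ :=
        norm_sum_le _ _
    _ ≤ ∑ _i ∈ Finset.range (k + 1), r ^ (k + 2) := Finset.sum_le_sum hterm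
    _ = (k + 1 : ℝ) * r ^ (k + 2) := by
        rw [Finset.sum_const, Finset.card_range, nsmul_eq_mul]; push_cast; ring

lemma norm_zcoef_eq (m k : ℕ) :
    ‖zcoef s m k‖ = ((k + m).choose m : ℝ) * ‖s‖⁻¹ ^ (m + 1 + k) := by
  rw [zcoef, norm_smul, Real.norm_eq_abs, abs_of_nonneg (by positivity), norm_pow, norm_inv]

end quat
set_option linter.unusedSectionVars false
set_option maxHeartbeats 1000000
set_option synthInstance.maxHeartbeats 200000

section oper

/-- Right multiplication by a quaternion, as a bounded real-linear operator on `X`. -/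
def rmulL (q : ℍ) : X →L[ℝ] X :=
  LinearMap.mkContinuous
    { toFun := fun v => op q • v
      map_add' := fun u v => smul_add (op q) u v
      map_smul' := fun r v => (smul_comm r (op q) v).symm }
    ‖op q‖ (fun v => norm_smul_le (op q) v)

lemma lmulL_apply (a : ℍ) (v : X) : lmulL a v = a • v := rfl

lemma rmulL_apply (q : ℍ) (v : X) : rmulL q v = op q • v := rfl

lemma lmulL_add (a b : ℍ) : (lmulL (a + b) : X →L[ℝ] X) = lmulL a + lmulL b := by
  ext v; simp [lmulL_apply, add_smul]

lemma lmulL_sub (a b : ℍ) : (lmulL (a - b) : X →L[ℝ] X) = lmulL a - lmulL b := by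
  ext v; simp [lmulL_apply, sub_smul]

lemma lmulL_mul (a b : ℍ) : (lmulL (a * b) : X →L[ℝ] X) = lmulL a * lmulL b := by
  ext v; simp [lmulL_apply, mul_smul, ContinuousLinearMap.mul_apply]

lemma lmulL_one : (lmulL 1 : X →L[ℝ] X) = 1 := by
  ext v; simp [lmulL_apply]

lemma lmulL_zero : (lmulL 0 : X →L[ℝ] X) = 0 := by
  ext v; simp [lmulL_apply]

lemma lmulL_neg_one : (lmulL (-1) : X →L[ℝ] X) = -1 := by
  ext v; simp [lmulL_apply]

lemma lmulL_smul (r : ℝ) (a : ℍ) : (lmulL (r • a) : X →L[ℝ] X) = r • lmulL a := by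
  ext v; simp [lmulL_apply, smul_assoc]

lemma norm_lmulL_le (a : ℍ) : ‖(lmulL a : X →L[ℝ] X)‖ ≤ ‖a‖ :=
  LinearMap.mkContinuous_norm_le _ (norm_nonneg a) _

lemma RightLinear.mul {A B : X →L[ℝ] X} (hA : RightLinear A) (hB : RightLinear B) :
    RightLinear (A * B) := fun q v => by
  simp only [ContinuousLinearMap.mul_apply, hB q v, hA q (B v)]

lemma RightLinear.one : RightLinear (1 : X →L[ℝ] X) := fun _ _ => rfl

lemma RightLinear.pow {T : X →L[ℝ] X} (hT : RightLinear T) (n : ℕ) : RightLinear (T ^ n) := by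
  induction n with
  | zero => simpa [pow_zero] using RightLinear.one
  | succ n ih => rw [pow_succ]; exact ih.mul hT

lemma RightLinear.lmulL' (a : ℍ) : RightLinear (lmulL a : X →L[ℝ] X) := fun q v => by
  simp only [lmulL_apply]; exact smul_comm a (op q) v

lemma RightLinear.tsum {f : ℕ → X →L[ℝ] X} (hf : Summable f)
    (h : ∀ k, RightLinear (f k)) : RightLinear (∑' k, f k) := by
  intro q v
  have e : ∀ w : X, (∑' k, f k) w = ∑' k, f k w := fun w =>
    (ContinuousLinearMap.apply ℝ X w).map_tsum hf
  rw [e, e]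
  have hfv : Summable fun k => f k v := (ContinuousLinearMap.apply ℝ X v).summable hf
  calc ∑' k, f k (op q • v) = ∑' k, rmulL q (f k v) := by
        exact tsum_congr fun k => h k q v
    _ = rmulL q (∑' k, f k v) := ((rmulL q).map_tsum hfv).symm
    _ = op q • ∑' k, f k v := rfl

/-- the operator series `∑ Tᵏ ∘ lmulL (c k)` -/
def opS (T : X →L[ℝ] X) (c : ℕ → ℍ) : X →L[ℝ] X := ∑' k, T ^ k * lmulL (c k)

/-- the operator series `∑ lmulL (c k) ∘ Tᵏ` -/
def opS' (T : X →L[ℝ] X) (c : ℕ → ℍ) : X →L[ℝ] X := ∑' k, lmulL (c k) * T ^ k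

section opSlemmas

variable {T : X →L[ℝ] X} {P : ℝ} (hP : ∀ k : ℕ, ‖T ^ k‖ ≤ P) {c : ℕ → ℍ}
  (hc : Summable fun k => ‖c k‖)

include hP hc

lemma summable_opS : Summable fun k => T ^ k * lmulL (c k) := by
  refine Summable.of_norm_bounded (g := fun k => P * ‖c k‖) (hc.mul_left P) fun k => ?_
  calc ‖T ^ k * lmulL (c k)‖ ≤ ‖T ^ k‖ * ‖(lmulL (c k) : X →L[ℝ] X)‖ := norm_mul_le _ _
    _ ≤ P * ‖c k‖ :=
      mul_le_mul (hP k) (norm_lmulL_le _) (norm_nonneg _) ((norm_nonneg _).trans (hP 0))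

lemma summable_opS' : Summable fun k => lmulL (c k) * T ^ k := by
  refine Summable.of_norm_bounded (g := fun k => ‖c k‖ * P) (hc.mul_right P) fun k => ?_
  calc ‖lmulL (c k) * T ^ k‖ ≤ ‖(lmulL (c k) : X →L[ℝ] X)‖ * ‖T ^ k‖ := norm_mul_le _ _
    _ ≤ ‖c k‖ * P :=
      mul_le_mul (norm_lmulL_le _) (hP k) (norm_nonneg _) (norm_nonneg _)

omit hP hc

lemma summable_norm_pre (hc : Summable fun k => ‖c k‖) : Summable fun k => ‖pre c k‖ := by
  apply (summable_nat_add_iff 1).mp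
  simpa [pre] using hc

include hP hc

lemma opS_shift1 : (∑' k, T ^ (k + 1) * lmulL (c k)) = opS T (pre c) := by
  rw [opS]
  have h := Function.Injective.tsum_eq (g := fun k : ℕ => k + 1) (add_left_injective 1)
    (f := fun x => T ^ x * lmulL (pre c x)) (fun x hx => ?_)
  · rw [← h]
    exact tsum_congr fun k => by simp [pre]
  · rcases x with _ | k
    · exact absurd (by simp [pre, lmulL_zero]) hx
    · exact ⟨k, rfl⟩

lemma opS_shift2 : (∑' k, T ^ (k + 1 + 1) * lmulL (c k)) = opS T (pre (pre c)) := by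
  rw [opS]
  have h := Function.Injective.tsum_eq (g := fun k : ℕ => k + 1 + 1)
    (fun a b hab => by simpa using hab)
    (f := fun x => T ^ x * lmulL (pre (pre c) x)) (fun x hx => ?_)
  · rw [← h]
    exact tsum_congr fun k => by simp [pre]
  · rcases x with _ | _ | k
    · exact absurd (by simp [pre, lmulL_zero]) hx
    · exact absurd (by simp [pre, lmulL_zero]) hx
    · exact ⟨k, rfl⟩

lemma T_mul_opS : T * opS T c = opS T (pre c) := by
  rw [opS, ← Summable.tsum_mul_left T (summable_opS hP hc), ← opS_shift1 hP hc]
  exact tsum_congr fun k => by rw [← mul_assoc, ← pow_succ']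

lemma opS_mul_lmulL (q : ℍ) : opS T c * lmulL q = opS T (fun k => c k * q) := by
  rw [opS, ← Summable.tsum_mul_right (lmulL q) (summable_opS hP hc), opS]
  exact tsum_congr fun k => by rw [mul_assoc, ← lmulL_mul]

omit hP hc

lemma opS_smul (r : ℝ) : r • opS T c = opS T (fun k => r • c k) := by
  rw [opS, opS, ← tsum_const_smul'' r]
  exact tsum_congr fun k => by rw [← mul_smul_comm, ← lmulL_smul]

lemma opS'_smul (r : ℝ) : r • opS' T c = opS' T (fun k => r • c k) := by
  rw [opS', opS', ← tsum_const_smul'' r]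
  exact tsum_congr fun k => by rw [← smul_mul_assoc, ← lmulL_smul]

include hP hc

lemma Qs_mul_opS (s : ℍ) : Qs s T * opS T c = opS T (qop s c) := by
  have h1 : Summable fun k => T ^ k * lmulL (c k) := summable_opS hP hc
  have e2 : (T * T) * opS T c = opS T (pre (pre c)) := by
    rw [opS, ← Summable.tsum_mul_left (T * T) h1, ← opS_shift2 hP hc]
    refine tsum_congr fun k => ?_
    rw [← mul_assoc]
    congr 1
    rw [mul_assoc, ← pow_succ', ← pow_succ']
  have e1 : ((2 * s.re) • T) * opS T c = opS T (fun k => (2 * s.re) • pre c k) := by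
    rw [smul_mul_assoc, T_mul_opS hP hc, opS_smul]
  have e0 : ((‖s‖ ^ 2 : ℝ) • (1 : X →L[ℝ] X)) * opS T c
      = opS T (fun k => (‖s‖ ^ 2 : ℝ) • c k) := by
    rw [smul_mul_assoc, one_mul, opS_smul]
  rw [Qs, add_mul, sub_mul, e2, e1, e0]
  have hs1 : Summable fun k => T ^ k * lmulL (pre (pre c) k) :=
    summable_opS hP (summable_norm_pre (summable_norm_pre hc))
  have hs2 : Summable fun k => T ^ k * lmulL ((2 * s.re) • pre c k) := by
    refine summable_opS hP ?_
    simp only [norm_smul]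
    exact (summable_norm_pre hc).mul_left _
  have hs3 : Summable fun k => T ^ k * lmulL ((‖s‖ ^ 2 : ℝ) • c k) := by
    refine summable_opS hP ?_
    simp only [norm_smul]
    exact hc.mul_left _
  rw [opS, opS, opS, opS, ← Summable.tsum_sub hs1 hs2, ← Summable.tsum_add (hs1.sub hs2) hs3]
  refine tsum_congr fun k => ?_
  rw [qop, lmulL_add, lmulL_sub, mul_add, mul_sub]

lemma opS'_mul_Qs (s : ℍ) : opS' T c * Qs s T = opS' T (qop s c) := by
  have h1 : Summable fun k => lmulL (c k) * T ^ k := summable_opS' hP hc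
  have sh1 : (∑' k, lmulL (c k) * T ^ (k + 1)) = opS' T (pre c) := by
    rw [opS']
    have h := Function.Injective.tsum_eq (g := fun k : ℕ => k + 1) (add_left_injective 1)
      (f := fun x => lmulL (pre c x) * T ^ x) (fun x hx => ?_)
    · rw [← h]
      exact tsum_congr fun k => by simp [pre]
    · rcases x with _ | k
      · exact absurd (by simp [pre, lmulL_zero]) hx
      · exact ⟨k, rfl⟩
  have sh2 : (∑' k, lmulL (c k) * T ^ (k + 1 + 1)) = opS' T (pre (pre c)) := by
    rw [opS']
    have h := Function.Injective.tsum_eq (g := fun k : ℕ => k + 1 + 1)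
      (fun a b hab => by simpa using hab)
      (f := fun x => lmulL (pre (pre c) x) * T ^ x) (fun x hx => ?_)
    · rw [← h]
      exact tsum_congr fun k => by simp [pre]
    · rcases x with _ | _ | k
      · exact absurd (by simp [pre, lmulL_zero]) hx
      · exact absurd (by simp [pre, lmulL_zero]) hx
      · exact ⟨k, rfl⟩
  have eT : opS' T c * T = opS' T (pre c) := by
    rw [opS', ← Summable.tsum_mul_right T h1, ← sh1]
    exact tsum_congr fun k => by rw [mul_assoc, ← pow_succ]
  have e2 : opS' T c * (T * T) = opS' T (pre (pre c)) := by
    rw [opS', ← Summable.tsum_mul_right (T * T) h1, ← sh2]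
    refine tsum_congr fun k => ?_
    rw [mul_assoc, show T ^ k * (T * T) = T ^ (k + 1 + 1) by
      rw [← mul_assoc, ← pow_succ, ← pow_succ]]
  have e1 : opS' T c * ((2 * s.re) • T) = opS' T (fun k => (2 * s.re) • pre c k) := by
    rw [mul_smul_comm, eT, opS'_smul]
  have e0 : opS' T c * ((‖s‖ ^ 2 : ℝ) • (1 : X →L[ℝ] X))
      = opS' T (fun k => (‖s‖ ^ 2 : ℝ) • c k) := by
    rw [mul_smul_comm, mul_one, opS'_smul]
  rw [Qs, mul_add, mul_sub, e2, e1, e0]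
  have hs1 : Summable fun k => lmulL (pre (pre c) k) * T ^ k :=
    summable_opS' hP (summable_norm_pre (summable_norm_pre hc))
  have hs2 : Summable fun k => lmulL ((2 * s.re) • pre c k) * T ^ k := by
    refine summable_opS' hP ?_
    simp only [norm_smul]
    exact (summable_norm_pre hc).mul_left _
  have hs3 : Summable fun k => lmulL ((‖s‖ ^ 2 : ℝ) • c k) * T ^ k := by
    refine summable_opS' hP ?_
    simp only [norm_smul]
    exact hc.mul_left _
  rw [opS', opS', opS', opS', ← Summable.tsum_sub hs1 hs2, ← Summable.tsum_add (hs1.sub hs2) hs3]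
  refine tsum_congr fun k => ?_
  rw [qop, lmulL_add, lmulL_sub, add_mul, sub_mul]

omit hP hc

lemma opS_single (q : ℍ) : opS T (fun k => if k = 0 then q else 0) = lmulL q := by
  rw [opS, tsum_eq_single 0 (fun b hb => by simp [if_neg hb, lmulL_zero])]
  simp [lmulL_apply]

lemma opS'_single (q : ℍ) : opS' T (fun k => if k = 0 then q else 0) = lmulL q := by
  rw [opS', tsum_eq_single 0 (fun b hb => by simp [if_neg hb, lmulL_zero])]
  simp [lmulL_apply]

lemma opS_double (q0 q1 : ℍ) :
    opS T (fun k => if k = 0 then q0 else if k = 1 then q1 else 0)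
      = lmulL q0 + T * lmulL q1 := by
  rw [opS, tsum_eq_sum (s := Finset.range 2) (fun b hb => ?_)]
  · rw [Finset.sum_range_succ, Finset.sum_range_one]
    norm_num [pow_one]
  · have hb2 : ¬(b = 0) ∧ ¬(b = 1) := by
      rw [Finset.mem_range] at hb; omega
    simp [if_neg hb2.1, if_neg hb2.2, lmulL_zero]

lemma RightLinear.opS {c : ℕ → ℍ} (hT : RightLinear T)
    (hsum : Summable fun k => T ^ k * lmulL (c k)) : RightLinear (opS T c) :=
  RightLinear.tsum hsum fun k => (hT.pow k).mul (RightLinear.lmulL' (c k))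

end opSlemmas

end oper

/-- The finite sum appearing in `sResLn`. -/
def Wsum (s : ℍ) (T : X →L[ℝ] X) (n : ℕ) : X →L[ℝ] X :=
  ∑ m ∈ Finset.range (n + 1), (n.choose m : ℝ) • ((-T) ^ m * lmulL (star s ^ (n - m)))

section main

variable {T : X →L[ℝ] X} {s : ℍ} {P : ℝ}
  (hs : 1 < ‖s‖) (hP : ∀ k : ℕ, ‖T ^ k‖ ≤ P)

lemma hs0 (hs : 1 < ‖s‖) : s ≠ 0 := by
  intro h
  rw [h, norm_zero] at hs
  linarith

lemma hrlt (hs : 1 < ‖s‖) : ‖s‖⁻¹ < 1 := by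
  rw [inv_lt_one₀ (lt_trans zero_lt_one hs)]
  exact hs

include hs

lemma summable_acoef_norm : Summable fun k => ‖acoef s k‖ := by
  have hr := hrlt hs
  have hr0 : (0 : ℝ) ≤ ‖s‖⁻¹ := by positivity
  have h1 : Summable fun k : ℕ => ((k : ℝ) + 1) * ‖s‖⁻¹ ^ k := by
    have ha := summable_pow_mul_geometric_of_norm_lt_one (R := ℝ) 1
      (r := ‖s‖⁻¹) (by rwa [Real.norm_eq_abs, abs_of_nonneg hr0])
    have hb := summable_geometric_of_lt_one hr0 hr
    refine (ha.add hb).congr fun k => ?_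
    push_cast
    ring
  have h2 : Summable fun k : ℕ => ((k : ℝ) + 1) * ‖s‖⁻¹ ^ (k + 2) :=
    (h1.mul_left (‖s‖⁻¹ ^ 2)).congr fun k => by ring
  refine Summable.of_nonneg_of_le (fun k => norm_nonneg _) (fun k => ?_) h2
  exact_mod_cast norm_acoef_le le_rfl (by positivity) k

lemma summable_zcoef_norm (m : ℕ) : Summable fun k => ‖zcoef s m k‖ := by
  have hr := hrlt hs
  have hr0 : (0 : ℝ) ≤ ‖s‖⁻¹ := by positivity
  have hg : Summable fun k : ℕ => ((k + m).choose m : ℝ) * ‖s‖⁻¹ ^ k :=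
    summable_choose_mul_geometric_of_norm_lt_one m
      (by rwa [Real.norm_eq_abs, abs_of_nonneg hr0])
  refine (hg.mul_left (‖s‖⁻¹ ^ (m + 1))).congr fun k => ?_
  rw [norm_zcoef_eq, pow_add]
  ring

include hP

lemma QB : Qs s T * opS T (acoef s) = 1 := by
  rw [Qs_mul_opS hP (summable_acoef_norm hs)]
  have h : qop s (acoef s) = fun k => if k = 0 then (1 : ℍ) else 0 := by
    funext k
    rcases k with _ | _ | k
    · rw [key0_0 (hs0 hs)]; rfl
    · rw [key0_1 (hs0 hs)]; rfl
    · rw [key0_ss (hs0 hs)]; rfl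
  rw [h, opS_single, lmulL_one]

lemma B'Q : opS' T (acoef s) * Qs s T = 1 := by
  rw [opS'_mul_Qs hP (summable_acoef_norm hs)]
  have h : qop s (acoef s) = fun k => if k = 0 then (1 : ℍ) else 0 := by
    funext k
    rcases k with _ | _ | k
    · rw [key0_0 (hs0 hs)]; rfl
    · rw [key0_1 (hs0 hs)]; rfl
    · rw [key0_ss (hs0 hs)]; rfl
  rw [h, opS'_single, lmulL_one]

lemma BQ : opS T (acoef s) * Qs s T = 1 := by
  have hB : opS T (acoef s) = opS' T (acoef s) := by
    calc opS T (acoef s) = 1 * opS T (acoef s) := (one_mul _).symm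
      _ = (opS' T (acoef s) * Qs s T) * opS T (acoef s) := by rw [B'Q hs hP]
      _ = opS' T (acoef s) * (Qs s T * opS T (acoef s)) := mul_assoc _ _ _
      _ = opS' T (acoef s) * 1 := by rw [QB hs hP]
      _ = opS' T (acoef s) := mul_one _
  rw [hB, B'Q hs hP]

lemma rinv_eq : Ring.inverse (Qs s T) = opS T (acoef s) :=
  Ring.inverse_unit ⟨Qs s T, opS T (acoef s), QB hs hP, BQ hs hP⟩

lemma pow_inv_cancel (n : ℕ) : opS T (acoef s) ^ n * Qs s T ^ n = 1 := by
  induction n with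
  | zero => simp
  | succ n ih =>
    rw [pow_succ, pow_succ', mul_assoc, ← mul_assoc (opS T (acoef s)), BQ hs hP, one_mul, ih]

omit hs hP

lemma commute_Qs_T : Commute (Qs s T) T := by
  rw [Qs]
  exact (((Commute.refl T).mul_left (Commute.refl T)).sub_left
    ((Commute.refl T).smul_left _)).add_left ((Commute.one_left T).smul_left _)

lemma Wsum_succ (n : ℕ) :
    Wsum s T (n + 1) = Wsum s T n * lmulL (star s) - T * Wsum s T n := by
  have hR1 : Wsum s T n * lmulL (star s)
      = ∑ j ∈ Finset.range (n + 1),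
          (n.choose j : ℝ) • ((-T) ^ j * lmulL (star s ^ (n - j + 1))) := by
    rw [Wsum, Finset.sum_mul]
    refine Finset.sum_congr rfl fun j hj => ?_
    rw [smul_mul_assoc, mul_assoc, ← lmulL_mul, ← pow_succ]
  have hR2 : T * Wsum s T n
      = -∑ j ∈ Finset.range (n + 1),
          (n.choose j : ℝ) • ((-T) ^ (j + 1) * lmulL (star s ^ (n - j))) := by
    rw [Wsum, Finset.mul_sum, ← Finset.sum_neg_distrib]
    refine Finset.sum_congr rfl fun j hj => ?_
    rw [mul_smul_comm, ← smul_neg]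
    congr 1
    rw [← mul_assoc, pow_succ' (-T) j, neg_mul, neg_mul, neg_neg]
  rw [hR1, hR2, sub_neg_eq_add]
  rw [Wsum, Finset.sum_range_succ']
  have hf0 : ((n + 1).choose 0 : ℝ) • ((-T) ^ 0 * lmulL (star s ^ (n + 1 - 0)))
      = lmulL (star s ^ (n + 1)) := by
    simp
  have hsplit : ∀ j ∈ Finset.range (n + 1),
      (((n + 1).choose (j + 1) : ℝ)) • ((-T) ^ (j + 1) * lmulL (star s ^ (n + 1 - (j + 1))))
      = (n.choose j : ℝ) • ((-T) ^ (j + 1) * lmulL (star s ^ (n - j)))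
        + (n.choose (j + 1) : ℝ) • ((-T) ^ (j + 1) * lmulL (star s ^ (n - j))) := by
    intro j hj
    rw [Nat.succ_sub_succ, Nat.choose_succ_succ]
    push_cast
    rw [add_smul]
  rw [Finset.sum_congr rfl hsplit, Finset.sum_add_distrib, hf0]
  have E : (∑ j ∈ Finset.range (n + 1),
        (n.choose (j + 1) : ℝ) • ((-T) ^ (j + 1) * lmulL (star s ^ (n - j))))
        + lmulL (star s ^ (n + 1))
      = ∑ j ∈ Finset.range (n + 1),
        (n.choose j : ℝ) • ((-T) ^ j * lmulL (star s ^ (n - j + 1))) := by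
    conv_rhs => rw [Finset.sum_range_succ']
    congr 1
    · rw [Finset.sum_range_succ, Nat.choose_succ_self]
      push_cast
      rw [zero_smul, add_zero]
      refine Finset.sum_congr rfl fun j hj => ?_
      rw [Finset.mem_range] at hj
      rw [show n - (j + 1) + 1 = n - j by omega]
    · simp
  rw [← E]
  abel

include hs hP

lemma QnZ (m : ℕ) : Qs s T ^ (m + 1) * opS T (zcoef s m) = Wsum s T (m + 1) := by
  induction m with
  | zero =>
    rw [pow_one, Qs_mul_opS hP (summable_zcoef_norm hs 0)]
    have hq : qop s (zcoef s 0)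
        = fun k => if k = 0 then star s else if k = 1 then (-1 : ℍ) else 0 := by
      funext k
      rcases k with _ | _ | k
      · rw [key1_0 (hs0 hs)]; rfl
      · rw [key1_1 (hs0 hs)]; rfl
      · rw [key1_ss (hs0 hs)]; rfl
    rw [hq, opS_double, lmulL_neg_one, mul_neg_one, Wsum]
    rw [Finset.sum_range_succ, Finset.sum_range_one]
    norm_num [pow_one, lmulL_one]
  | succ m ih =>
    rw [pow_succ, mul_assoc, Qs_mul_opS hP (summable_zcoef_norm hs (m + 1))]
    have hq : qop s (zcoef s (m + 1))
        = fun k => zcoef s m k * star s - pre (zcoef s m) k := by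
      funext k
      rcases k with _ | _ | k
      · rw [key2_0 (hs0 hs) m]
        show _ = _ - 0
        rw [sub_zero]
      · rw [key2_1 (hs0 hs) m]; rfl
      · rw [key2_ss (hs0 hs) m k]; rfl
    have hzt : Summable fun k => ‖zcoef s m k * star s‖ := by
      refine ((summable_zcoef_norm hs m).mul_right ‖star s‖).congr fun k => ?_
      rw [norm_mul]
    have hsum1 : Summable fun k => T ^ k * lmulL (zcoef s m k * star s) :=
      summable_opS hP hzt
    have hsum2 : Summable fun k => T ^ k * lmulL (pre (zcoef s m) k) :=
      summable_opS hP (summable_norm_pre (summable_zcoef_norm hs m))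
    have hsplit : opS T (fun k => zcoef s m k * star s - pre (zcoef s m) k)
        = opS T (zcoef s m) * lmulL (star s) - T * opS T (zcoef s m) := by
      rw [opS_mul_lmulL hP (summable_zcoef_norm hs m), T_mul_opS hP (summable_zcoef_norm hs m),
        opS, opS, opS, ← Summable.tsum_sub hsum1 hsum2]
      exact tsum_congr fun k => by rw [lmulL_sub, mul_sub]
    rw [hq, hsplit, mul_sub, ← mul_assoc, ih, ← mul_assoc,
      (commute_Qs_T.pow_left (m + 1)).eq, mul_assoc, ih, ← Wsum_succ]

lemma sResLn_eq (m : ℕ) : sResLn (m + 1) s T = opS T (zcoef s m) := by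
  have h : sResLn (m + 1) s T = Ring.inverse (Qs s T) ^ (m + 1) * Wsum s T (m + 1) := rfl
  rw [h, rinv_eq hs hP, ← QnZ hs hP m, ← mul_assoc, pow_inv_cancel hs hP, one_mul]

end main
/-- If `T` is power-bounded then for `|s| > 1` and `n ≥ 1`, `s ∈ ρ_S(T)` and
`‖Y_L^n(s,T)‖ ≤ p(T)/(1 − |s|⁻¹)ⁿ`. -/
theorem yosida_bound_of_powerBounded (T : X →L[ℝ] X) (hT : RightLinear T)
    (hpb : PowerBounded T) (s : ℍ) (hs : 1 < ‖s‖) (n : ℕ) (hn : 1 ≤ n) :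
    s ∈ sResolventSet T ∧ ‖YLn n s T‖ ≤ pBound T / (1 - ‖s‖⁻¹) ^ n := by
  obtain ⟨m, rfl⟩ : ∃ m, n = m + 1 := ⟨n - 1, by omega⟩
  obtain ⟨C, hC⟩ := hpb
  have hbdd : BddAbove (Set.range fun j : ℕ => ‖T ^ (j + 1)‖) := by
    refine ⟨C, ?_⟩
    rintro x ⟨j, rfl⟩
    exact hC (j + 1) (by omega)
  have hpB : ∀ j : ℕ, ‖T ^ (j + 1)‖ ≤ pBound T := fun j => le_ciSup hbdd j
  have hpB0 : (0 : ℝ) ≤ pBound T := (norm_nonneg _).trans (hpB 0)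
  have hP : ∀ k : ℕ, ‖T ^ k‖ ≤ max 1 (pBound T) := by
    intro k
    rcases k with _ | k
    · rw [pow_zero]
      refine le_trans ?_ (le_max_left _ _)
      rw [ContinuousLinearMap.one_def]
      exact ContinuousLinearMap.norm_id_le
    · exact (hpB k).trans (le_max_right _ _)
  have hr : ‖s‖⁻¹ < 1 := hrlt hs
  have hr0 : (0 : ℝ) ≤ ‖s‖⁻¹ := by positivity
  have hrn : ‖(‖s‖⁻¹ : ℝ)‖ < 1 := by rwa [Real.norm_eq_abs, abs_of_nonneg hr0]
  constructor
  · exact ⟨opS T (acoef s),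
      RightLinear.opS hT (summable_opS hP (summable_acoef_norm hs)),
      QB hs hP, BQ hs hP⟩
  · have hzsum := summable_zcoef_norm hs (m := m)
    have hzc : Summable fun k => T ^ k * lmulL (zcoef s m k) := summable_opS hP hzsum
    have hYL : YLn (m + 1) s T
        = ∑' k, T ^ (m + 1 + k) * lmulL (zcoef s m k * s ^ (m + 1)) := by
      rw [YLn, sResLn_eq hs hP m]
      have h1 : T ^ (m + 1) * opS T (zcoef s m)
          = ∑' k, T ^ (m + 1 + k) * lmulL (zcoef s m k) := by
        rw [opS, ← Summable.tsum_mul_left (T ^ (m + 1)) hzc]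
        exact tsum_congr fun k => by rw [← mul_assoc, ← pow_add]
      have hsum2 : Summable fun k => T ^ (m + 1 + k) * lmulL (zcoef s m k) :=
        (hzc.mul_left (T ^ (m + 1))).congr fun k => by rw [← mul_assoc, ← pow_add]
      rw [h1, ← Summable.tsum_mul_right (lmulL (s ^ (m + 1))) hsum2]
      exact tsum_congr fun k => by rw [mul_assoc, ← lmulL_mul]
    have hcs : ∀ k : ℕ, ‖zcoef s m k * s ^ (m + 1)‖ = ((k + m).choose m : ℝ) * ‖s‖⁻¹ ^ k := by
      intro k
      rw [zcoef, smul_mul_assoc, norm_smul, Real.norm_eq_abs, abs_of_nonneg (by positivity)]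
      congr 1
      have hz : s⁻¹ ^ (m + 1 + k) * s ^ (m + 1) = s⁻¹ ^ k := by
        rw [show m + 1 + k = k + (m + 1) by omega, pow_add, mul_assoc, inv_pow s (m + 1),
          inv_mul_cancel₀ (pow_ne_zero _ (hs0 hs)), mul_one]
      rw [hz, norm_pow, norm_inv]
    have hterm : ∀ k : ℕ, ‖T ^ (m + 1 + k) * lmulL (zcoef s m k * s ^ (m + 1))‖
        ≤ pBound T * (((k + m).choose m : ℝ) * ‖s‖⁻¹ ^ k) := by
      intro k
      calc ‖T ^ (m + 1 + k) * lmulL (zcoef s m k * s ^ (m + 1))‖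
          ≤ ‖T ^ (m + 1 + k)‖ * ‖(lmulL (zcoef s m k * s ^ (m + 1)) : X →L[ℝ] X)‖ :=
            norm_mul_le _ _
        _ ≤ pBound T * (((k + m).choose m : ℝ) * ‖s‖⁻¹ ^ k) := by
            refine mul_le_mul ?_ ((norm_lmulL_le _).trans_eq (hcs k)) (norm_nonneg _) hpB0
            rw [show m + 1 + k = (m + k) + 1 by omega]
            exact hpB (m + k)
    have hgeo : Summable fun k : ℕ => ((k + m).choose m : ℝ) * ‖s‖⁻¹ ^ k :=
      summable_choose_mul_geometric_of_norm_lt_one m hrn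
    have hRHS : Summable fun k : ℕ => pBound T * (((k + m).choose m : ℝ) * ‖s‖⁻¹ ^ k) :=
      hgeo.mul_left _
    have hnorm : Summable fun k => ‖T ^ (m + 1 + k) * lmulL (zcoef s m k * s ^ (m + 1))‖ :=
      Summable.of_nonneg_of_le (fun k => norm_nonneg _) hterm hRHS
    calc ‖YLn (m + 1) s T‖
        = ‖∑' k, T ^ (m + 1 + k) * lmulL (zcoef s m k * s ^ (m + 1))‖ := by rw [hYL]
      _ ≤ ∑' k, ‖T ^ (m + 1 + k) * lmulL (zcoef s m k * s ^ (m + 1))‖ :=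
          norm_tsum_le_tsum_norm hnorm
      _ ≤ ∑' k, pBound T * (((k + m).choose m : ℝ) * ‖s‖⁻¹ ^ k) :=
          Summable.tsum_le_tsum hterm hnorm hRHS
      _ = pBound T * ∑' k : ℕ, ((k + m).choose m : ℝ) * ‖s‖⁻¹ ^ k :=
          Summable.tsum_mul_left _ hgeo
      _ = pBound T * (1 / (1 - ‖s‖⁻¹) ^ (m + 1)) := by
          rw [tsum_choose_mul_geometric_of_norm_lt_one m hrn]
      _ = pBound T / (1 - ‖s‖⁻¹) ^ (m + 1) := by
          rw [mul_one_div]
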